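/- Let γ > 0 and let n be a positive integer. The function F(x₁,…,xₙ) = ∏ⱼ e^{γ√xⱼ} (1 + √xⱼ)^{−γ} is Schur-concave on [0,∞)ⁿ: if a = (a₁,…,aₙ) and b = (b₁,…,bₙ) are vectors of nonnegative reals such that a majorizes b, then F(a) ≤ F(b). -/

import Mathlib

open Real

private lemma phi_hasDeriv (t : ℝ) (ht : 0 ≤ t) {x : ℝ} (hx : -1 < x) :
    HasDerivAt (fun s => (s^2 - t^2)/(2*(1+t)) - s + Real.log (1+s))
      (x/(1+t) - 1 + 1/(1+x)) x := by
  have h1 : HasDerivAt (fun s : ℝ => (s^2 - t^2)/(2*(1+t))) (x/(1+t)) x := by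
    have : HasDerivAt (fun s : ℝ => s^2 - t^2) (2*x) x := by
      simpa using ((hasDerivAt_pow 2 x).sub_const (t^2))
    have := this.div_const (2*(1+t))
    convert this using 1
    have h1t : (1:ℝ) + t ≠ 0 := by linarith
    · rfl
    · rfl
    · field_simp
  have h2 : HasDerivAt (fun s : ℝ => Real.log (1+s)) (1/(1+x)) x := by
    have hne : (1:ℝ) + x ≠ 0 := by linarith
    have : HasDerivAt (fun s : ℝ => 1 + s) 1 x := by
      simpa using (hasDerivAt_id x).const_add 1
    simpa [Function.comp_def] using (Real.hasDerivAt_log hne).comp x this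
  exact (h1.sub (hasDerivAt_id x)).add h2

private lemma key_ineq (t : ℝ) (ht : 0 ≤ t) (s : ℝ) (hs : 0 ≤ s) :
    s - Real.log (1+s) ≤ t - Real.log (1+t) + (s^2 - t^2)/(2*(1+t)) := by
  set φ : ℝ → ℝ := fun s => (s^2 - t^2)/(2*(1+t)) - s + Real.log (1+s) with hφ
  have hcont : ∀ x : ℝ, -1 < x → ContinuousAt φ x := fun x hx =>
    (phi_hasDeriv t ht hx).continuousAt
  have hderiv : ∀ x : ℝ, -1 < x → deriv φ x = x/(1+t) - 1 + 1/(1+x) := fun x hx =>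
    (phi_hasDeriv t ht hx).deriv
  have hsign : ∀ x : ℝ, 0 < x → deriv φ x = x*(x-t)/((1+t)*(1+x)) := by
    intro x hx
    rw [hderiv x (by linarith)]
    have h1 : (1:ℝ) + t ≠ 0 := by linarith
    have h2 : (1:ℝ) + x ≠ 0 := by linarith
    field_simp
    ring
  have hmain : φ t ≤ φ s := by
    rcases le_total s t with h | h
    · have hanti : AntitoneOn φ (Set.Icc 0 t) := by
        apply antitoneOn_of_deriv_nonpos (convex_Icc 0 t)
        · exact fun x hx => (hcont x (by linarith [hx.1])).continuousWithinAt
        · intro x hx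
          rw [interior_Icc] at hx
          exact ((phi_hasDeriv t ht (by linarith [hx.1])).differentiableAt).differentiableWithinAt
        · intro x hx
          rw [interior_Icc] at hx
          rw [hsign x hx.1]
          apply div_nonpos_of_nonpos_of_nonneg
          · nlinarith [hx.1, hx.2]
          · nlinarith [hx.1]
      exact hanti ⟨hs, h⟩ ⟨ht, le_refl t⟩ h
    · have hmono : MonotoneOn φ (Set.Ici t) := by
        apply monotoneOn_of_deriv_nonneg (convex_Ici t)
        · exact fun x hx => (hcont x (by simp at hx; linarith)).continuousWithinAt
        · intro x hx
          rw [interior_Ici] at hx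
          simp at hx
          exact ((phi_hasDeriv t ht (by linarith)).differentiableAt).differentiableWithinAt
        · intro x hx
          rw [interior_Ici] at hx
          simp at hx
          rw [hsign x (by linarith)]
          apply div_nonneg
          · nlinarith
          · nlinarith
      exact hmono (Set.mem_Ici.2 (le_refl t)) (Set.mem_Ici.2 h) h
  have hval : φ t = -t + Real.log (1+t) := by
    simp [hφ]
  rw [hval] at hmain
  simp only [hφ] at hmain
  linarith

private lemma tangent_ineq (γ : ℝ) (hγ : 0 < γ) (x y : ℝ) (hx : 0 ≤ x) (hy : 0 ≤ y) :
    γ * (Real.sqrt x - Real.log (1 + Real.sqrt x))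
      ≤ γ * (Real.sqrt y - Real.log (1 + Real.sqrt y))
        + γ / (2 * (1 + Real.sqrt y)) * (x - y) := by
  have h := key_ineq (Real.sqrt y) (Real.sqrt_nonneg y) (Real.sqrt x) (Real.sqrt_nonneg x)
  rw [Real.sq_sqrt hx, Real.sq_sqrt hy] at h
  have hden : (0:ℝ) < 2 * (1 + Real.sqrt y) := by
    have := Real.sqrt_nonneg y; linarith
  have h2 := mul_le_mul_of_nonneg_left h hγ.le
  have h3 : γ * (Real.sqrt y - Real.log (1 + Real.sqrt y) + (x - y) / (2 * (1 + Real.sqrt y)))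
      = γ * (Real.sqrt y - Real.log (1 + Real.sqrt y))
        + γ / (2 * (1 + Real.sqrt y)) * (x - y) := by
    field_simp
  calc γ * (Real.sqrt x - Real.log (1 + Real.sqrt x)) ≤ _ := h2
    _ = _ := h3

private lemma abel_lemma (c P : ℕ → ℝ) (hc : Antitone c) (hP : ∀ k, P k ≤ 0)
    (h0 : P 0 = 0) : ∀ n, ∑ k ∈ Finset.range n, c k * (P (k+1) - P k) ≤ c n * P n := by
  intro n
  induction n with
  | zero => simp [h0]
  | succ n ih =>
      rw [Finset.sum_range_succ]
      have h1 : c n * P n + c n * (P (n+1) - P n) = c n * P (n+1) := by ring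
      have h2 : c n * P (n+1) ≤ c (n+1) * P (n+1) :=
        mul_le_mul_of_nonpos_right (hc (Nat.le_succ n)) (hP (n+1))
      linarith

private lemma card_filter_le_val (n k : ℕ) :
    (Finset.univ.filter (fun j : Fin n => k ≤ (j:ℕ))).card = n - k := by
  rw [← Finset.card_image_of_injective _ Fin.val_injective]
  have : (Finset.univ.filter (fun j : Fin n => k ≤ (j:ℕ))).image Fin.val
      = Finset.Ico k n := by
    ext m
    simp only [Finset.mem_image, Finset.mem_filter, Finset.mem_univ, true_and, Finset.mem_Ico]
    constructor
    · rintro ⟨j, hj, rfl⟩; exact ⟨hj, j.isLt⟩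
    · rintro ⟨h1, h2⟩; exact ⟨⟨m, h2⟩, h1, rfl⟩
  rw [this, Nat.card_Ico]

private lemma sum_le_top {n : ℕ} (f : Fin n → ℝ) (hf : Monotone f) (u : Finset (Fin n)) :
    ∑ j ∈ u, f j ≤ ∑ j ∈ Finset.univ.filter (fun j : Fin n => n - u.card ≤ (j:ℕ)), f j := by
  set m := u.card with hm
  rcases Nat.eq_zero_or_pos m with h0 | hpos
  · have hu : u = ∅ := Finset.card_eq_zero.mp (by omega)
    have htop : Finset.univ.filter (fun j : Fin n => n - m ≤ (j:ℕ)) = ∅ := by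
      ext j
      simp only [Finset.mem_filter, Finset.mem_univ, true_and, Finset.notMem_empty, iff_false,
        not_le, h0, Nat.sub_zero]
      exact j.isLt
    rw [hu, htop]
  · have hmn : m ≤ n := by
      calc m = u.card := hm ▸ rfl
        _ ≤ Finset.univ.card := Finset.card_le_card (Finset.subset_univ u)
        _ = n := by simp
    have hpn : n - m < n := by omega
    set p : Fin n := ⟨n - m, hpn⟩ with hp
    set top := Finset.univ.filter (fun j : Fin n => n - m ≤ (j:ℕ)) with htop
    have hcardtop : top.card = m := by
      rw [htop, card_filter_le_val]; omega
    have hcards : (u \ top).card = (top \ u).card := by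
      have h1 := Finset.card_inter_add_card_sdiff u top
      have h2 := Finset.card_inter_add_card_sdiff top u
      rw [Finset.inter_comm] at h2
      omega
    have hle1 : ∑ j ∈ u \ top, f j ≤ (u \ top).card • f p := by
      apply Finset.sum_le_card_nsmul
      intro x hx
      simp only [Finset.mem_sdiff, htop, Finset.mem_filter, Finset.mem_univ, true_and, not_le] at hx
      exact hf (le_of_lt (show x < p from hx.2))
    have hle2 : (top \ u).card • f p ≤ ∑ j ∈ top \ u, f j := by
      apply Finset.card_nsmul_le_sum
      intro x hx
      simp only [Finset.mem_sdiff, htop, Finset.mem_filter, Finset.mem_univ, true_and] at hx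
      exact hf (show p ≤ x from hx.1)
    have hsplit1 := Finset.sum_inter_add_sum_sdiff u top f
    have hsplit2 := Finset.sum_inter_add_sum_sdiff top u f
    rw [Finset.inter_comm] at hsplit2
    rw [hcards] at hle1
    linarith

private lemma filter_sum_eq {n : ℕ} (f : Fin n → ℝ) (k : ℕ) (hk : k ≤ n) :
    ∑ j ∈ Finset.univ.filter (fun j : Fin n => (j:ℕ) < k), f j
      = ∑ i ∈ Finset.range k, (if h : i < n then f ⟨i, h⟩ else 0) := by
  rw [Finset.sum_filter]
  have h1 : ∑ j : Fin n, (if (j:ℕ) < k then f j else 0)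
      = ∑ i ∈ Finset.range n, (if i < k then (if h : i < n then f ⟨i, h⟩ else 0) else 0) := by
    rw [← Fin.sum_univ_eq_sum_range]
    apply Finset.sum_congr rfl
    intro j _
    by_cases h : (j:ℕ) < k
    · simp [h, j.isLt]
    · simp [h]
  rw [h1, ← Finset.sum_filter]
  apply Finset.sum_congr
  · ext i
    simp only [Finset.mem_filter, Finset.mem_range]
    omega
  · intros; rfl

/-- `a` majorizes `b`: for every `k`, the sum of the `k` largest entries of `a` is at least
that of `b` (expressed via subsets of each cardinality), with equal total sums. -/
def Majorizes {n : ℕ} (a b : Fin n → ℝ) : Prop :=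
  (∀ s : Finset (Fin n), ∃ t : Finset (Fin n), t.card = s.card ∧ ∑ j ∈ s, b j ≤ ∑ j ∈ t, a j)
  ∧ ∑ j, a j = ∑ j, b j

theorem schur_concave_F
    (γ : ℝ) (hγ : 0 < γ) (n : ℕ) (hn : 0 < n)
    (a b : Fin n → ℝ) (ha : ∀ j, 0 ≤ a j) (hb : ∀ j, 0 ≤ b j)
    (hmaj : Majorizes a b) :
    ∏ j, Real.exp (γ * Real.sqrt (a j)) * (1 + Real.sqrt (a j)) ^ (-γ)
      ≤ ∏ j, Real.exp (γ * Real.sqrt (b j)) * (1 + Real.sqrt (b j)) ^ (-γ) := by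
  classical
  set g : ℝ → ℝ := fun x => γ * (Real.sqrt x - Real.log (1 + Real.sqrt x)) with hg
  -- reduce to a sum inequality
  have hfac : ∀ x : ℝ, 0 ≤ x →
      Real.exp (γ * Real.sqrt x) * (1 + Real.sqrt x) ^ (-γ) = Real.exp (g x) := by
    intro x hx
    have hpos : (0:ℝ) < 1 + Real.sqrt x := by
      have := Real.sqrt_nonneg x; linarith
    rw [Real.rpow_def_of_pos hpos, ← Real.exp_add]
    congr 1
    rw [hg]
    ring
  have hprod : ∀ (f : Fin n → ℝ), (∀ j, 0 ≤ f j) →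
      ∏ j, Real.exp (γ * Real.sqrt (f j)) * (1 + Real.sqrt (f j)) ^ (-γ)
        = Real.exp (∑ j, g (f j)) := by
    intro f hf
    rw [Real.exp_sum]
    exact Finset.prod_congr rfl fun j _ => hfac (f j) (hf j)
  rw [hprod a ha, hprod b hb, Real.exp_le_exp]
  -- sorted versions
  set σ := Tuple.sort a with hσ
  set τ := Tuple.sort b with hτ
  set a' : Fin n → ℝ := a ∘ σ with ha'
  set b' : Fin n → ℝ := b ∘ τ with hb'
  have ha'mono : Monotone a' := Tuple.monotone_sort a
  have hb'mono : Monotone b' := Tuple.monotone_sort b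
  have ha'nn : ∀ j, 0 ≤ a' j := fun j => ha (σ j)
  have hb'nn : ∀ j, 0 ≤ b' j := fun j => hb (τ j)
  -- ℕ-indexed sequences
  set α : ℕ → ℝ := fun i => if h : i < n then a' ⟨i, h⟩ else 0 with hα
  set β : ℕ → ℝ := fun i => if h : i < n then b' ⟨i, h⟩ else 0 with hβ
  have hαnn : ∀ i, 0 ≤ α i := by
    intro i; rw [hα]; dsimp only; split
    · exact ha'nn _
    · exact le_rfl
  have hβnn : ∀ i, 0 ≤ β i := by
    intro i; rw [hβ]; dsimp only; split
    · exact hb'nn _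
    · exact le_rfl
  -- total sums
  have hsuma : ∑ j, a' j = ∑ j, a j := by
    rw [ha']; exact Equiv.sum_comp σ a
  have hsumb : ∑ j, b' j = ∑ j, b j := by
    rw [hb']; exact Equiv.sum_comp τ b
  have hrangea : ∑ i ∈ Finset.range n, α i = ∑ j, a' j := by
    rw [← Fin.sum_univ_eq_sum_range]
    apply Finset.sum_congr rfl
    intro j _
    rw [hα]; simp [j.isLt]
  have hrangeb : ∑ i ∈ Finset.range n, β i = ∑ j, b' j := by
    rw [← Fin.sum_univ_eq_sum_range]
    apply Finset.sum_congr rfl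
    intro j _
    rw [hβ]; simp [j.isLt]
  -- partial sum comparison
  have hC : ∀ k, k ≤ n → ∑ i ∈ Finset.range k, α i ≤ ∑ i ∈ Finset.range k, β i := by
    intro k hk
    have hsuf : ∑ j ∈ Finset.univ.filter (fun j : Fin n => k ≤ (j:ℕ)), b' j
        ≤ ∑ j ∈ Finset.univ.filter (fun j : Fin n => k ≤ (j:ℕ)), a' j := by
      obtain ⟨t, htc, hts⟩ :=
        hmaj.1 ((Finset.univ.filter (fun j : Fin n => k ≤ (j:ℕ))).image τ)
      have h1 : ∑ j ∈ (Finset.univ.filter (fun j : Fin n => k ≤ (j:ℕ))).image τ, b j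
          = ∑ j ∈ Finset.univ.filter (fun j : Fin n => k ≤ (j:ℕ)), b' j := by
        rw [Finset.sum_image (fun x _ y _ h => τ.injective h)]
        rfl
      have hcard : ((Finset.univ.filter (fun j : Fin n => k ≤ (j:ℕ))).image τ).card = n - k := by
        rw [Finset.card_image_of_injective _ τ.injective, card_filter_le_val]
      set u := t.image σ.symm with hu
      have h2 : ∑ j ∈ t, a j = ∑ j ∈ u, a' j := by
        rw [hu, Finset.sum_image (fun x _ y _ h => σ.symm.injective h)]
        apply Finset.sum_congr rfl
        intro x _
        rw [ha']
        simp
      have hucard : u.card = n - k := by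
        rw [hu, Finset.card_image_of_injective _ σ.symm.injective, htc, hcard]
      have h3 := sum_le_top a' ha'mono u
      rw [hucard] at h3
      have hnk : n - (n - k) = k := by omega
      rw [hnk] at h3
      calc ∑ j ∈ Finset.univ.filter (fun j : Fin n => k ≤ (j:ℕ)), b' j
          = ∑ j ∈ (Finset.univ.filter (fun j : Fin n => k ≤ (j:ℕ))).image τ, b j := h1.symm
        _ ≤ ∑ j ∈ t, a j := hts
        _ = ∑ j ∈ u, a' j := h2
        _ ≤ _ := h3
    -- split total sum into prefix + suffix
    have hsplit : ∀ f : Fin n → ℝ,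
        ∑ j ∈ Finset.univ.filter (fun j : Fin n => (j:ℕ) < k), f j
          + ∑ j ∈ Finset.univ.filter (fun j : Fin n => k ≤ (j:ℕ)), f j = ∑ j, f j := by
      intro f
      have := Finset.sum_filter_add_sum_filter_not Finset.univ (fun j : Fin n => (j:ℕ) < k) f
      have heq : Finset.univ.filter (fun j : Fin n => ¬ (j:ℕ) < k)
          = Finset.univ.filter (fun j : Fin n => k ≤ (j:ℕ)) := by
        apply Finset.filter_congr
        intro j _
        simp [not_lt]
      rw [heq] at this
      exact this
    have hpre : ∑ j ∈ Finset.univ.filter (fun j : Fin n => (j:ℕ) < k), a' j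
        ≤ ∑ j ∈ Finset.univ.filter (fun j : Fin n => (j:ℕ) < k), b' j := by
      have h4 := hsplit a'
      have h5 := hsplit b'
      have h6 : ∑ j, a' j = ∑ j, b' j := by rw [hsuma, hsumb, hmaj.2]
      linarith
    rw [filter_sum_eq a' k hk, filter_sum_eq b' k hk] at hpre
    exact hpre
  -- partial sums P
  set P : ℕ → ℝ := fun k => ∑ i ∈ Finset.range k, (α i - β i) with hP
  have hPeq : ∀ k, P k = ∑ i ∈ Finset.range k, α i - ∑ i ∈ Finset.range k, β i := by
    intro k; rw [hP]; exact Finset.sum_sub_distrib α β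
  have hPn : P n = 0 := by
    rw [hPeq, hrangea, hrangeb, hsuma, hsumb, hmaj.2]; ring
  have hPstab : ∀ k, n ≤ k → P k = P n := by
    intro k hk
    rw [hP]
    dsimp only
    symm
    apply Finset.sum_subset (Finset.range_subset_range.2 hk)
    intro i _ hi
    rw [Finset.mem_range, not_lt] at hi
    have hα0 : α i = 0 := by rw [hα]; simp [Nat.not_lt.2 hi]
    have hβ0 : β i = 0 := by rw [hβ]; simp [Nat.not_lt.2 hi]
    rw [hα0, hβ0]; ring
  have hPle : ∀ k, P k ≤ 0 := by
    intro k
    rcases le_or_gt k n with h | h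
    · rw [hPeq]
      have := hC k h
      linarith
    · rw [hPstab k h.le, hPn]
  have hP0 : P 0 = 0 := by rw [hP]; simp
  -- the antitone coefficients
  set c : ℕ → ℝ := fun k => γ / (2 * (1 + Real.sqrt (β (min k (n-1))))) with hc
  have hβmono : ∀ i j : ℕ, i ≤ j → j < n → β i ≤ β j := by
    intro i j hij hjn
    have hin : i < n := lt_of_le_of_lt (le_of_le_of_eq hij rfl) hjn
    rw [hβ]
    simp only [hin, hjn, dif_pos]
    exact hb'mono (by exact_mod_cast hij)
  have hcanti : Antitone c := by
    intro k l hkl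
    rw [hc]
    dsimp only
    have h1 : min k (n-1) ≤ min l (n-1) := by omega
    have h2 : min l (n-1) < n := by omega
    have hββ : β (min k (n-1)) ≤ β (min l (n-1)) := hβmono _ _ h1 h2
    have hs : Real.sqrt (β (min k (n-1))) ≤ Real.sqrt (β (min l (n-1))) :=
      Real.sqrt_le_sqrt hββ
    have hpos : (0:ℝ) < 2 * (1 + Real.sqrt (β (min k (n-1)))) := by
      have := Real.sqrt_nonneg (β (min k (n-1))); linarith
    apply div_le_div_of_nonneg_left hγ.le hpos
    linarith
  -- main estimate
  have hsum : ∑ j, g (a j) ≤ ∑ j, g (b j) := by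
    have hga : ∑ j, g (a j) = ∑ i ∈ Finset.range n, g (α i) := by
      rw [← Equiv.sum_comp σ (fun j => g (a j)), ← Fin.sum_univ_eq_sum_range]
      apply Finset.sum_congr rfl
      intro j _
      congr 1
      rw [hα]; simp [j.isLt]; rw [ha']; rfl
    have hgb : ∑ j, g (b j) = ∑ i ∈ Finset.range n, g (β i) := by
      rw [← Equiv.sum_comp τ (fun j => g (b j)), ← Fin.sum_univ_eq_sum_range]
      apply Finset.sum_congr rfl
      intro j _
      congr 1
      rw [hβ]; simp [j.isLt]; rw [hb']; rfl
    rw [hga, hgb, ← sub_nonpos, ← Finset.sum_sub_distrib]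
    have hterm : ∀ i ∈ Finset.range n, g (α i) - g (β i) ≤ c i * (P (i+1) - P i) := by
      intro i hi
      rw [Finset.mem_range] at hi
      have hmin : min i (n-1) = i := by omega
      have hPd : P (i+1) - P i = α i - β i := by
        rw [hP]; dsimp only; rw [Finset.sum_range_succ]; ring
      rw [hPd, hc]
      dsimp only
      rw [hmin]
      have := tangent_ineq γ hγ (α i) (β i) (hαnn i) (hβnn i)
      rw [hg]
      dsimp only
      linarith
    calc ∑ i ∈ Finset.range n, (g (α i) - g (β i))
        ≤ ∑ i ∈ Finset.range n, c i * (P (i+1) - P i) := Finset.sum_le_sum hterm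
      _ ≤ c n * P n := abel_lemma c P hcanti hPle hP0 n
      _ = 0 := by rw [hPn]; ring
  exact hsum
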